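/- Let E be a real Banach space, 𝓚 ⊆ E nonempty closed convex, M ≥ 1, ω ∈ ℝ, h* > 0, and let (J_h)_{0<h≤h*, hω<1} be a family of continuous linear operators on E satisfying J_h(𝓚) ⊆ 𝓚 and ‖J_h‖ ≤ M/(1 − hω) for all admissible h. Let g : 𝓚 → E be continuous and tangent to 𝓚, i.e., g(x) ∈ T_𝓚(x) for every x ∈ 𝓚. Then for every x ∈ 𝓚 and every ε > 0 there is δ > 0 such that d(J_h(y + h•g(y)), 𝓚) < ε·h whenever 0 < h < δ, hω < 1, h ≤ h*, y ∈ 𝓚 and ‖y − x‖ < δ; that is, d(J_h(y + h g(y)), 𝓚)/h → 0 as h → 0⁺ and y → x in 𝓚. -/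
import Mathlib


open Metric Set

/-- Let `𝓚 ⊆ E` be nonempty closed convex, and let `(J_h)` be a family of
continuous linear operators with `J_h(𝓚) ⊆ 𝓚` and `‖J_h‖ ≤ M/(1 - hω)` for `0 < h ≤ h*`,
`hω < 1`.  If `g : 𝓚 → E` is continuous and tangent to `𝓚`, then
`d(J_h(y + h g(y)), 𝓚)/h → 0` as `h → 0⁺` and `y → x` within `𝓚`, for every `x ∈ 𝓚`. -/
theorem resolvent_tangency_estimate
    {E : Type*} [NormedAddCommGroup E] [NormedSpace ℝ E] [CompleteSpace E]
    (𝓚 : Set E) (hne : 𝓚.Nonempty) (hcl : IsClosed 𝓚) (hconv : Convex ℝ 𝓚)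
    (M ω hstar : ℝ) (hM : 1 ≤ M) (hstar_pos : 0 < hstar)
    (J : ℝ → E →L[ℝ] E)
    (hJinv : ∀ h : ℝ, 0 < h → h ≤ hstar → h * ω < 1 → ∀ x ∈ 𝓚, J h x ∈ 𝓚)
    (hJnorm : ∀ h : ℝ, 0 < h → h ≤ hstar → h * ω < 1 → ‖J h‖ ≤ M / (1 - h * ω))
    (g : E → E) (hgcont : ContinuousOn g 𝓚)
    (hgtan : ∀ x ∈ 𝓚,
      g x ∈ closure (⋃ h ∈ Set.Ioi (0:ℝ), (fun k => h⁻¹ • (k - x)) '' 𝓚)) :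
    ∀ x ∈ 𝓚, ∀ ε > (0:ℝ), ∃ δ > (0:ℝ), ∀ h : ℝ, 0 < h → h < δ → h ≤ hstar → h * ω < 1 →
      ∀ y ∈ 𝓚, ‖y - x‖ < δ →
        Metric.infDist (J h (y + h • g y)) 𝓚 < ε * h := by
  intro x hx ε hε
  have hMpos : (0:ℝ) < M := lt_of_lt_of_le one_pos hM
  set ε' := ε / (8 * M) with hε'def
  have hε'pos : 0 < ε' := by positivity
  -- tangency at x
  obtain ⟨s, hs, hds⟩ := Metric.mem_closure_iff.mp (hgtan x hx) ε' hε'pos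
  simp only [Set.mem_iUnion, Set.mem_image, Set.mem_Ioi] at hs
  obtain ⟨lam, hlam, k, hk, hks⟩ := hs
  -- continuity at x
  have hc := hgcont x hx
  rw [Metric.continuousWithinAt_iff] at hc
  obtain ⟨δ₁, hδ₁pos, hδ₁⟩ := hc ε' hε'pos
  set mω := max ω 1 with hmωdef
  have hmω : (0:ℝ) < mω := lt_of_lt_of_le one_pos (le_max_right _ _)
  refine ⟨min (min δ₁ lam) (min (ε' * lam) (1/(2*mω))), by positivity, ?_⟩
  intro h hh hhδ hhstar hhω y hy hyx
  have hhδ₁ : ‖y - x‖ < δ₁ := lt_of_lt_of_le hyx (le_trans (min_le_left _ _) (min_le_left _ _))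
  have hhlam : h < lam := lt_of_lt_of_le hhδ (le_trans (min_le_left _ _) (min_le_right _ _))
  have hyxε : ‖y - x‖ < ε' * lam :=
    lt_of_lt_of_le hyx (le_trans (min_le_right _ _) (min_le_left _ _))
  have hhmω : h < 1/(2*mω) :=
    lt_of_lt_of_le hhδ (le_trans (min_le_right _ _) (min_le_right _ _))
  -- 1 - h * ω ≥ 1/2
  have hhalf : (1:ℝ)/2 ≤ 1 - h * ω := by
    have h1 : h * ω ≤ h * mω := by
      apply mul_le_mul_of_nonneg_left (le_max_left _ _) hh.le
    have h2 : h * mω < (1/(2*mω)) * mω := by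
      exact mul_lt_mul_of_pos_right hhmω hmω
    have h3 : (1/(2*mω)) * mω = 1/2 := by field_simp; try ring
    nlinarith
  have hJ2M : ‖J h‖ ≤ 2 * M := by
    have := hJnorm h hh hhstar hhω
    have hpos : (0:ℝ) < 1 - h * ω := lt_of_lt_of_le (by norm_num) hhalf
    calc ‖J h‖ ≤ M / (1 - h * ω) := this
      _ ≤ M / (1/2) := by gcongr <;> norm_num
      _ = 2 * M := by ring
  -- the convex combination point
  have htlam : 0 ≤ h / lam := by positivity
  have htlam1 : h / lam ≤ 1 := by
    rw [div_le_one hlam]; exact hhlam.le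
  set z := (1 - h/lam) • y + (h/lam) • k with hzdef
  have hz : z ∈ 𝓚 := hconv hy hk (by linarith) htlam (by ring)
  have hJz : J h z ∈ 𝓚 := hJinv h hh hhstar hhω z hz
  set w := y + h • g y with hwdef
  set v := g y - lam⁻¹ • (k - y) with hvdef
  have hlamne : lam ≠ 0 := ne_of_gt hlam
  have hwz : w - z = h • v := by
    rw [hwdef, hzdef, hvdef]
    match_scalars <;> (try field_simp) <;> (try ring)
  have hveq : v = (g y - g x) + (g x - lam⁻¹ • (k - x)) + lam⁻¹ • (y - x) := by
    rw [hvdef]; module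
  have hnv : ‖v‖ < 3 * ε' := by
    have h1 : ‖g y - g x‖ < ε' := by
      have := hδ₁ hy (by rwa [dist_eq_norm])
      rwa [dist_eq_norm] at this
    have h2 : ‖g x - lam⁻¹ • (k - x)‖ < ε' := by
      rw [hks] at *
      rwa [dist_eq_norm] at hds
    have h3 : ‖lam⁻¹ • (y - x)‖ < ε' := by
      rw [norm_smul, Real.norm_eq_abs, abs_of_pos (inv_pos.mpr hlam)]
      calc lam⁻¹ * ‖y - x‖ < lam⁻¹ * (ε' * lam) := by
            exact mul_lt_mul_of_pos_left hyxε (inv_pos.mpr hlam)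
        _ = ε' := by field_simp
    calc ‖v‖ ≤ ‖g y - g x‖ + ‖g x - lam⁻¹ • (k - x)‖ + ‖lam⁻¹ • (y - x)‖ := by
          rw [hveq]; exact norm_add₃_le
      _ < ε' + ε' + ε' := by linarith
      _ = 3 * ε' := by ring
  calc Metric.infDist (J h w) 𝓚 ≤ dist (J h w) (J h z) := Metric.infDist_le_dist_of_mem hJz
    _ = ‖J h (w - z)‖ := by rw [dist_eq_norm, ← map_sub]
    _ ≤ ‖J h‖ * ‖w - z‖ := (J h).le_opNorm _
    _ ≤ (2 * M) * ‖w - z‖ := mul_le_mul_of_nonneg_right hJ2M (norm_nonneg _)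
    _ = (2 * M) * (h * ‖v‖) := by
        rw [hwz, norm_smul, Real.norm_eq_abs, abs_of_pos hh]
    _ < (2 * M) * (h * (3 * ε')) := by
        apply mul_lt_mul_of_pos_left _ (by positivity)
        exact mul_lt_mul_of_pos_left hnv hh
    _ = (3/4) * (ε * h) := by
        rw [hε'def]; field_simp; ring
    _ < ε * h := by nlinarith
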